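/- arXiv:1901.03466 — 3 statements merged into one kernel-verified Lean document; each statement's English description precedes it below -/
import Mathlib

section
/- As x → ∞, ln Γ(x) = (1/2)ln(2π) + (x − 1/2)ln x − x + 1/(12x) + o(1/x). -/
open Real Filter Asymptotics

noncomputable def ψS (x : ℝ) : ℝ :=
  (1 / 2) * Real.log (2 * Real.pi) + (x - 1 / 2) * Real.log x - x + 1 / (12 * x)

noncomputable def fS (x : ℝ) : ℝ := Real.log (Real.Gamma x) - ψS x

noncomputable def gS (x : ℝ) : ℝ := ψS (x + 1) - ψS x - Real.log x

noncomputable def FS (x : ℝ) : ℝ := ∑' k : ℕ, gS (x + k)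

lemma gS_eq {x : ℝ} (hx : 0 < x) :
    gS x = (x + 1/2) * Real.log (1 + 1/x) - 1 - 1/(12*x*(x+1)) := by
  have h1 : Real.log (1 + 1/x) = Real.log (x+1) - Real.log x := by
    rw [show (1 : ℝ) + 1/x = (x+1)/x by field_simp]
    exact Real.log_div (by positivity) (by positivity)
  simp only [gS, ψS, h1]
  have : (12:ℝ) * (x+1) ≠ 0 := by positivity
  field_simp
  ring

lemma log_cubic_approx {x : ℝ} (hx : 2 ≤ x) :
    |Real.log (1 + 1/x) - (1/x - 1/(2*x^2) + 1/(3*x^3))| ≤ 2 / x^4 := by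
  have hx0 : (0:ℝ) < x := by linarith
  have ht : |(-(1/x) : ℝ)| < 1 := by
    rw [abs_neg, abs_of_pos (by positivity), div_lt_one hx0]; linarith
  have h := Real.abs_log_sub_add_sum_range_le ht 3
  have hsum : (∑ i ∈ Finset.range 3, (-(1/x))^(i+1)/((i:ℝ)+1))
      = -(1/x) + 1/(2*x^2) - 1/(3*x^3) := by
    simp [Finset.sum_range_succ]; ring
  rw [hsum, show (1:ℝ) - -(1/x) = 1 + 1/x by ring] at h
  have heq : Real.log (1 + 1/x) - (1/x - 1/(2*x^2) + 1/(3*x^3))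
      = -(1/x) + 1/(2*x^2) - 1/(3*x^3) + Real.log (1 + 1/x) := by ring
  rw [heq]
  refine h.trans ?_
  rw [abs_neg, abs_of_pos (by positivity)]
  have h4 : (1:ℝ)/2 ≤ 1 - 1/x := by
    have : 1/x ≤ 1/2 := by rw [div_le_div_iff₀ hx0 two_pos]; linarith
    linarith
  have h5 : ((1:ℝ)/x)^(3+1) = 1/x^4 := by rw [one_div_pow]
  rw [h5]
  calc 1/x^4 / (1 - 1/x) ≤ 1/x^4 / (1/2) :=
        div_le_div_of_nonneg_left (by positivity) (by norm_num) h4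
    _ = 2 / x^4 := by field_simp

lemma gS_bound {x : ℝ} (hx : 2 ≤ x) : |gS x| ≤ 5 / x^3 := by
  have hx0 : (0:ℝ) < x := by linarith
  rw [gS_eq hx0]
  set E := Real.log (1 + 1/x) - (1/x - 1/(2*x^2) + 1/(3*x^3)) with hE
  have hEb : |E| ≤ 2 / x^4 := log_cubic_approx hx
  have key : (x + 1/2) * Real.log (1 + 1/x) - 1 - 1/(12*x*(x+1))
      = 1/(12*x^2*(x+1)) + 1/(6*x^3) + (x+1/2)*E := by
    rw [hE]
    field_simp
    ring
  rw [key]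
  have h2 : 1/(12*x^2*(x+1)) ≤ 1/(12*x^3) := by
    apply div_le_div_of_nonneg_left one_pos.le (by positivity)
    nlinarith
  have h3 : |(x+1/2)*E| ≤ 4 / x^3 := by
    rw [abs_mul, abs_of_pos (by linarith : (0:ℝ) < x + 1/2)]
    calc (x+1/2) * |E| ≤ (2*x) * (2/x^4) := by
          apply mul_le_mul (by linarith) hEb (abs_nonneg _) (by linarith)
      _ = 4 / x^3 := by field_simp; ring
  calc |1/(12*x^2*(x+1)) + 1/(6*x^3) + (x+1/2)*E|
      ≤ |1/(12*x^2*(x+1)) + 1/(6*x^3)| + |(x+1/2)*E| := abs_add_le _ _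
    _ ≤ (1/(12*x^3) + 1/(6*x^3)) + 4/x^3 := by
        have : |1/(12*x^2*(x+1)) + 1/(6*x^3)| = 1/(12*x^2*(x+1)) + 1/(6*x^3) :=
          abs_of_pos (by positivity)
        rw [this]; linarith
    _ ≤ 5 / x^3 := by
        rw [show 1/(12*x^3)+1/(6*x^3)+4/x^3 = (17/4)/x^3 by field_simp; ring]
        gcongr
        norm_num

lemma tele_step {y : ℝ} (hy : 2 ≤ y) :
    5/y^3 ≤ (5/2)/(y-1/2)^2 - (5/2)/(y+1/2)^2 := by
  have h1 : (0:ℝ) < y - 1/2 := by linarith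
  have h2 : (0:ℝ) < y + 1/2 := by linarith
  have h0 : (0:ℝ) < y := by linarith
  rw [div_sub_div _ _ (by positivity) (by positivity),
    div_le_div_iff₀ (by positivity) (by positivity)]
  nlinarith [pow_pos h0 3, sq_nonneg y, sq_nonneg (y*y-1), pow_pos h0 2]

lemma telescope_bound {x : ℝ} (hx : 2 ≤ x) (n : ℕ) :
    ∑ k ∈ Finset.range n, 5/(x + k)^3 ≤ (5/2) / (x - 1/2)^2 := by
  have hd : ∀ k : ℕ, (0:ℝ) < x + k - 1/2 := by
    intro k; have : (0:ℝ) ≤ k := Nat.cast_nonneg k; linarith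
  calc ∑ k ∈ Finset.range n, 5/(x + k)^3
      ≤ ∑ k ∈ Finset.range n,
          ((5/2)/(x + k - 1/2)^2 - (5/2)/(x + (k+1) - 1/2)^2) := by
        apply Finset.sum_le_sum
        intro k _
        have hy : (2:ℝ) ≤ x + k := by
          have : (0:ℝ) ≤ k := Nat.cast_nonneg k; linarith
        have := tele_step hy
        have e1 : x + (k:ℝ) - 1/2 = (x + k) - 1/2 := by ring
        have e2 : x + ((k:ℝ)+1) - 1/2 = (x + k) + 1/2 := by ring
        rw [e1, e2]; exact this
    _ = (5/2)/(x + (0:ℕ) - 1/2)^2 - (5/2)/(x + (n:ℝ) - 1/2)^2 := by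
        have := Finset.sum_range_sub' (fun k : ℕ => (5/2)/(x + k - 1/2)^2) n
        simpa [Nat.cast_add, Nat.cast_one] using this
    _ ≤ (5/2) / (x - 1/2)^2 := by
        have h1 : (0:ℝ) < x + (n:ℝ) - 1/2 := hd n
        have h2 : (0:ℝ) ≤ (5/2)/(x + (n:ℝ) - 1/2)^2 := by positivity
        simp only [Nat.cast_zero, add_zero]
        linarith

lemma shift_two_le {x : ℝ} (hx : 2 ≤ x) (k : ℕ) : (2:ℝ) ≤ x + k := by
  have : (0:ℝ) ≤ k := Nat.cast_nonneg k; linarith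

lemma sum_range_abs_le {x : ℝ} (hx : 2 ≤ x) (n : ℕ) :
    ∑ k ∈ Finset.range n, |gS (x + k)| ≤ (5/2) / (x - 1/2)^2 := by
  refine le_trans (Finset.sum_le_sum fun k _ => gS_bound (shift_two_le hx k)) ?_
  exact telescope_bound hx n

lemma summable_abs_gS {x : ℝ} (hx : 2 ≤ x) : Summable (fun k : ℕ => |gS (x + k)|) :=
  summable_of_sum_range_le (fun _ => abs_nonneg _) (sum_range_abs_le hx)

lemma summable_gS {x : ℝ} (hx : 2 ≤ x) : Summable (fun k : ℕ => gS (x + k)) :=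
  (summable_abs_gS hx).of_abs

lemma FS_bound {x : ℝ} (hx : 2 ≤ x) : |FS x| ≤ 10 / x^2 := by
  have hs : Summable (fun k : ℕ => ‖gS (x + k)‖) := by
    simp only [Real.norm_eq_abs]; exact summable_abs_gS hx
  have h1 : |FS x| ≤ ∑' k : ℕ, |gS (x + k)| := by
    have := norm_tsum_le_tsum_norm hs
    simp only [Real.norm_eq_abs] at this
    exact this
  have h2 : ∑' k : ℕ, |gS (x + k)| ≤ (5/2) / (x - 1/2)^2 :=
    Real.tsum_le_of_sum_range_le (fun _ => abs_nonneg _) (sum_range_abs_le hx)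
  have h3 : (5/2) / (x - 1/2)^2 ≤ 10 / x^2 := by
    rw [div_le_div_iff₀ (by nlinarith) (by positivity)]
    nlinarith
  linarith

lemma FS_rec {x : ℝ} (hx : 2 ≤ x) : FS x = gS x + FS (x + 1) := by
  have h := Summable.tsum_eq_zero_add (summable_gS hx)
  simp only [Nat.cast_zero, add_zero, Nat.cast_add, Nat.cast_one] at h
  simp only [FS]
  rw [h]
  congr 1
  exact tsum_congr fun k => by ring_nf

lemma fS_rec {x : ℝ} (hx : 0 < x) : fS (x + 1) = fS x - gS x := by
  have hΓ : Real.Gamma (x + 1) = x * Real.Gamma x := Real.Gamma_add_one (ne_of_gt hx)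
  have hlog : Real.log (Real.Gamma (x + 1)) = Real.log x + Real.log (Real.Gamma x) := by
    rw [hΓ, Real.log_mul (ne_of_gt hx) (ne_of_gt (Real.Gamma_pos_of_pos hx))]
  simp only [fS, gS, hlog]
  ring

lemma h_shift {x : ℝ} (hx : 2 ≤ x) (n : ℕ) :
    fS (x + n) - FS (x + n) = fS x - FS x := by
  induction n with
  | zero => norm_num
  | succ n ih =>
    have h2 : (2:ℝ) ≤ x + n := shift_two_le hx n
    have e : x + ((n:ℝ) + 1) = (x + n) + 1 := by ring
    push_cast
    rw [e, fS_rec (by linarith : (0:ℝ) < x + n)]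
    have := FS_rec h2
    have eF : FS ((x + n) + 1) = FS (x + n) - gS (x + n) := by linarith
    rw [eF]
    linarith

lemma tendsto_gS : Tendsto gS atTop (nhds 0) := by
  have h1 : Tendsto (fun x : ℝ => 5 / x^3) atTop (nhds 0) := by
    apply Tendsto.div_atTop tendsto_const_nhds
    exact tendsto_pow_atTop (by norm_num) |>.comp tendsto_id
  apply squeeze_zero_norm' _ h1
  filter_upwards [eventually_ge_atTop (2:ℝ)] with x hx
  simpa [Real.norm_eq_abs] using gS_bound hx

lemma tendsto_mul_log_one :
    Tendsto (fun x : ℝ => (x + 1/2) * Real.log (1 + 1/x)) atTop (nhds 1) := by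
  have h2 : Tendsto (fun x : ℝ => 1/(12*x*(x+1))) atTop (nhds 0) := by
    have hb : Tendsto (fun x : ℝ => 1/x) atTop (nhds 0) := by
      simpa using tendsto_inv_atTop_zero
    apply squeeze_zero_norm' _ hb
    filter_upwards [eventually_ge_atTop (1:ℝ)] with x hx
    rw [Real.norm_eq_abs, abs_of_pos (by positivity)]
    apply div_le_div_of_nonneg_left one_pos.le (by positivity)
    nlinarith
  have := tendsto_gS.add h2
  have he : (fun x : ℝ => gS x + 1/(12*x*(x+1))) =ᶠ[atTop]
      (fun x : ℝ => (x + 1/2) * Real.log (1 + 1/x) - 1) := by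
    filter_upwards [eventually_gt_atTop (0:ℝ)] with x hx
    rw [gS_eq hx]; ring
  have h3 := this.congr' he
  simpa using h3.add_const 1

lemma tendsto_fS_nat : Tendsto (fun n : ℕ => fS n) atTop (nhds 0) := by
  rw [← tendsto_add_atTop_iff_nat 1]
  have hL : Tendsto (fun n : ℕ => Real.log (Stirling.stirlingSeq n)) atTop
      (nhds ((1/2) * Real.log π)) := by
    have h := Stirling.tendsto_stirlingSeq_sqrt_pi
    have hcont := (Real.continuousAt_log (by positivity : Real.sqrt π ≠ 0)).tendsto
    have := hcont.comp h
    rwa [Function.comp_def, Real.log_sqrt Real.pi_pos.le,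
      show Real.log π / 2 = (1/2) * Real.log π by ring] at this
  have hT2 : Tendsto (fun n : ℕ => ((n:ℝ) + 1/2) * Real.log (1 + 1/(n:ℝ))) atTop (nhds 1) :=
    tendsto_mul_log_one.comp tendsto_natCast_atTop_atTop
  have hT3 : Tendsto (fun n : ℕ => 1/(12*((n:ℝ)+1))) atTop (nhds 0) := by
    have hb : Tendsto (fun x : ℝ => 1/x) atTop (nhds 0) := by
      simpa using tendsto_inv_atTop_zero
    apply squeeze_zero_norm' _ (hb.comp (tendsto_natCast_atTop_atTop (R := ℝ)))
    filter_upwards [eventually_ge_atTop 1] with n hn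
    have hn1 : (1:ℝ) ≤ (n:ℝ) := by exact_mod_cast hn
    rw [Real.norm_eq_abs, abs_of_pos (by positivity)]
    show (1:ℝ)/(12*((n:ℝ)+1)) ≤ 1/(n:ℝ)
    apply div_le_div_of_nonneg_left one_pos.le (by positivity)
    nlinarith
  have hcomb := ((hL.sub hT2).sub hT3).sub_const ((1/2) * Real.log π - 1)
  rw [show ((1/2) * Real.log π - 1 - 0 - ((1/2) * Real.log π - 1)) = 0 by ring] at hcomb
  apply hcomb.congr'
  filter_upwards [eventually_ge_atTop 1] with n hn
  have hn0 : (0:ℝ) < (n:ℝ) := by exact_mod_cast Nat.pos_of_ne_zero (by omega)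
  have hfact : Real.log (Nat.factorial n) = Real.log (Stirling.stirlingSeq n)
      + 1/2 * Real.log (2*(n:ℝ)) + (n:ℝ) * Real.log ((n:ℝ) / Real.exp 1) := by
    have := Stirling.log_stirlingSeq_formula n
    linarith
  have hΓ : Real.Gamma ((n:ℝ) + 1) = (Nat.factorial n : ℕ) := by
    exact_mod_cast Real.Gamma_nat_eq_factorial n
  have hlog2n : Real.log (2*(n:ℝ)) = Real.log 2 + Real.log (n:ℝ) :=
    Real.log_mul two_ne_zero (ne_of_gt hn0)
  have hlogne : Real.log ((n:ℝ) / Real.exp 1) = Real.log (n:ℝ) - 1 := by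
    rw [Real.log_div (ne_of_gt hn0) (Real.exp_ne_zero 1), Real.log_exp]
  have hlog2π : Real.log (2*π) = Real.log 2 + Real.log π :=
    Real.log_mul two_ne_zero (ne_of_gt Real.pi_pos)
  have hlogn1 : Real.log ((n:ℝ) + 1) = Real.log (n:ℝ) + Real.log (1 + 1/(n:ℝ)) := by
    rw [← Real.log_mul (ne_of_gt hn0) (by positivity)]
    congr 1
    field_simp
  have hc : ((n+1 : ℕ) : ℝ) = (n:ℝ) + 1 := by push_cast; ring
  rw [hc]
  simp only [fS, ψS, hΓ, hfact, hlog2n, hlogne, hlog2π, hlogn1]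
  ring
lemma logGamma_upper {m y : ℝ} (hm : 1 ≤ m) (h1 : m ≤ y) (h2 : y ≤ m + 1) :
    Real.log (Real.Gamma y) ≤ Real.log (Real.Gamma m) + (y - m) * Real.log m := by
  have hm0 : (0:ℝ) < m := by linarith
  set t := y - m with ht
  have ht0 : 0 ≤ t := by simp [ht]; linarith
  have ht1 : t ≤ 1 := by simp [ht]; linarith
  have C := Real.convexOn_log_Gamma
  have key := C.2 (Set.mem_Ioi.mpr hm0) (Set.mem_Ioi.mpr (by linarith : (0:ℝ) < m + 1))
    (by linarith : (0:ℝ) ≤ 1 - t) ht0 (by ring)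
  have harg : (1 - t) • m + t • (m + 1) = y := by
    simp [smul_eq_mul]; ring
  rw [harg] at key
  have hΓ : Real.log (Real.Gamma (m + 1)) = Real.log m + Real.log (Real.Gamma m) := by
    rw [Real.Gamma_add_one (ne_of_gt hm0),
      Real.log_mul (ne_of_gt hm0) (ne_of_gt (Real.Gamma_pos_of_pos hm0))]
  simp only [Function.comp_apply, smul_eq_mul] at key
  rw [hΓ] at key
  nlinarith [key]

lemma logGamma_lower {m y : ℝ} (hm : 2 ≤ m) (h1 : m ≤ y) (h2 : y ≤ m + 1) :
    Real.log (Real.Gamma m) + (y - m) * Real.log (m - 1) ≤ Real.log (Real.Gamma y) := by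
  have hm1 : (0:ℝ) < m - 1 := by linarith
  have hm0 : (0:ℝ) < m := by linarith
  set t := y - m with ht
  have ht0 : 0 ≤ t := by simp [ht]; linarith
  have ht1 : t ≤ 1 := by simp [ht]; linarith
  have hs0 : (0:ℝ) < t + 1 := by linarith
  set s := 1 / (t + 1) with hs
  have hs1 : s * (t + 1) = 1 := by rw [hs]; field_simp
  have hspos : 0 < s := by rw [hs]; positivity
  have hsle : s ≤ 1 := by rw [hs]; rw [div_le_one hs0]; linarith
  have C := Real.convexOn_log_Gamma
  have key := C.2 (Set.mem_Ioi.mpr hm1) (Set.mem_Ioi.mpr (by linarith : (0:ℝ) < y))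
    (by linarith : (0:ℝ) ≤ 1 - s) hspos.le (by ring)
  have harg : (1 - s) • (m - 1) + s • y = m := by
    simp only [smul_eq_mul]
    have hy : y = m + t := by rw [ht]; ring
    rw [hy, hs]
    field_simp
    ring
  rw [harg] at key
  have hΓ : Real.log (Real.Gamma m) = Real.log (m - 1) + Real.log (Real.Gamma (m - 1)) := by
    rw [show m = (m - 1) + 1 by ring, Real.Gamma_add_one (ne_of_gt hm1),
      Real.log_mul (ne_of_gt hm1) (ne_of_gt (Real.Gamma_pos_of_pos hm1)),
      show m - 1 + 1 - 1 = m - 1 by ring]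
  simp only [Function.comp_apply, smul_eq_mul] at key
  -- key : log Γ m ≤ (1-s) * log Γ (m-1) + s * log Γ y
  rw [hΓ] at key
  -- want : (log(m-1) + logΓ(m-1)) + t * log(m-1) ≤ logΓ y
  rw [hΓ]
  have key2 := mul_le_mul_of_nonneg_left key hs0.le
  have hexp : (t+1) * ((1 - s) * Real.log (Real.Gamma (m-1)) + s * Real.log (Real.Gamma y))
      = (t+1) * Real.log (Real.Gamma (m-1)) - Real.log (Real.Gamma (m-1))
        + Real.log (Real.Gamma y) := by
    rw [hs]; field_simp
  rw [hexp] at key2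
  nlinarith [key2]

lemma log1p_le {u : ℝ} (hu : 0 ≤ u) : Real.log (1 + u) ≤ u := by
  have := Real.log_le_sub_one_of_pos (by linarith : (0:ℝ) < 1 + u)
  linarith

lemma log1p_ge {u : ℝ} (hu : 0 ≤ u) : u - u^2 ≤ Real.log (1 + u) := by
  have h1 : (0:ℝ) < 1 + u := by linarith
  have h := Real.log_le_sub_one_of_pos (by positivity : (0:ℝ) < (1+u)⁻¹)
  rw [Real.log_inv] at h
  have h2 : -((1+u)⁻¹ - 1) ≤ Real.log (1+u) := by linarith
  have h3 : -((1+u)⁻¹ - 1) = u / (1+u) := by field_simp; ring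
  rw [h3] at h2
  have h4 : u - u^2 ≤ u / (1+u) := by
    rw [le_div_iff₀ h1]; nlinarith
  linarith

set_option maxHeartbeats 1000000 in
lemma interp {m y : ℝ} (hm : 3 ≤ m) (h1 : m ≤ y) (h2 : y ≤ m + 1) :
    |fS y - fS m| ≤ 4 / (m - 1) := by
  have hm0 : (0:ℝ) < m := by linarith
  have hm1 : (0:ℝ) < m - 1 := by linarith
  have hy0 : (0:ℝ) < y := by linarith
  have ht0 : (0:ℝ) ≤ y - m := by linarith
  have ht1 : y - m ≤ 1 := by linarith
  have hu0 : (0:ℝ) ≤ (y - m)/m := by positivity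
  have hlogy : Real.log y = Real.log m + Real.log (1 + (y - m)/m) := by
    rw [← Real.log_mul (ne_of_gt hm0) (by positivity)]
    congr 1
    field_simp
    ring
  set E := Real.log (1 + (y - m)/m) with hEdef
  have hE1 : E ≤ (y - m)/m := log1p_le hu0
  have hE2 : (y - m)/m - ((y - m)/m)^2 ≤ E := log1p_ge hu0
  have hψ : ψS y - ψS m = (y - m) * Real.log m + (y - 1/2) * E - (y - m)
      + (1/(12*y) - 1/(12*m)) := by
    simp only [ψS, hlogy]
    ring
  have hcoef : (0:ℝ) < y - 1/2 := by linarith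
  have hv0 : (0:ℝ) < 1/m := by positivity
  have hv3 : 1/m ≤ 1/3 := by
    rw [div_le_div_iff₀ hm0 (by norm_num : (0:ℝ) < 3)]; linarith
  have hA : (y-m)*(1/m) ≤ 1/m := by nlinarith
  have hD : (y-m)^2*(1/m) ≤ 1/m := by nlinarith
  have hB : (y-m)^3*(1/m)^2 ≤ (1/m)^2 := by nlinarith [sq_nonneg (1/m), pow_le_one₀ ht0 ht1 (n := 3)]
  have hC : (1/m)^2 ≤ (1/m)/3 := by nlinarith
  have hup : (y - 1/2) * E ≤ (y - m) + 1/m := by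
    have hh := mul_le_mul_of_nonneg_left hE1 hcoef.le
    have hexp2 : (y - 1/2) * ((y - m)/m)
        = (y-m) + (y-m)^2*(1/m) - (y-m)*(1/m)/2 := by
      field_simp; ring
    rw [hexp2] at hh
    have := mul_nonneg ht0 hv0.le
    linarith
  have hlo : (y - m) - 2/m ≤ (y - 1/2) * E := by
    have hh := mul_le_mul_of_nonneg_left hE2 hcoef.le
    have hrh : (y - 1/2) * ((y-m)/m - ((y-m)/m)^2)
        = (y-m) - (y-m)*(1/m)/2 - (y-m)^3*(1/m)^2 + (y-m)^2*(1/m)^2/2 := by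
      field_simp
      ring
    rw [hrh] at hh
    have hsq : (0:ℝ) ≤ (y-m)^2*(1/m)^2/2 := by positivity
    have h2v : 2/m = 2*(1/m) := by ring
    rw [show (y - m) - 2/m = (y-m) - 2*(1/m) by ring]
    linarith
  have hδ1 : 1/(12*y) ≤ 1/(12*m) := by
    apply div_le_div_of_nonneg_left one_pos.le (by positivity); linarith
  have hδ2 : (0:ℝ) < 1/(12*y) := by positivity
  have hloggap : Real.log m - Real.log (m-1) ≤ 1/(m-1) := by
    have e : Real.log m = Real.log (m-1) + Real.log (1 + 1/(m-1)) := by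
      rw [← Real.log_mul (ne_of_gt hm1) (by positivity)]
      congr 1
      field_simp
      ring
    rw [e]
    have := log1p_le (le_of_lt (by positivity : (0:ℝ) < 1/(m-1)))
    linarith
  have hloggap0 : (0:ℝ) ≤ Real.log m - Real.log (m-1) := by
    have := Real.log_le_log (by linarith : (0:ℝ) < m - 1) (by linarith : m - 1 ≤ m)
    linarith
  have hupper := logGamma_upper (by linarith : (1:ℝ) ≤ m) h1 h2
  have hlower := logGamma_lower (by linarith : (2:ℝ) ≤ m) h1 h2
  have hgap := mul_le_mul_of_nonneg_left hloggap ht0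
  have hgap0 := mul_nonneg ht0 hloggap0
  have hbound1 : 2/m + 1/(12*m) ≤ 4/(m-1) := by
    rw [show 2/m + 1/(12*m) = 25/(12*m) by field_simp; ring,
      div_le_div_iff₀ (by positivity) hm1]
    nlinarith
  have hbound2 : 1/m + 1/(12*m) + 1/(m-1) ≤ 4/(m-1) := by
    have e : 1/m + 1/(12*m) = 13/(12*m) := by field_simp; ring
    have e2 : 13/(12*m) ≤ 3/(m-1) := by
      rw [div_le_div_iff₀ (by positivity) hm1]; nlinarith
    have e3 : 3/(m-1) + 1/(m-1) = 4/(m-1) := by ring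
    linarith
  have htm : (y - m) * (1/(m-1)) ≤ 1/(m-1) := by
    nlinarith [ht1, ht0, (by positivity : (0:ℝ) < 1/(m-1))]
  have hfeq : fS y - fS m = (Real.log (Real.Gamma y) - Real.log (Real.Gamma m))
      - (ψS y - ψS m) := by simp only [fS]; ring
  rw [abs_le]
  constructor
  · -- lower bound
    rw [hfeq, hψ]
    have hlow2 : Real.log (Real.Gamma y) - Real.log (Real.Gamma m)
        ≥ (y - m) * Real.log m - (y - m) * (Real.log m - Real.log (m-1)) := by
      nlinarith [hlower]
    linarith
  · rw [hfeq, hψ]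
    linarith

lemma tendsto_fS : Tendsto fS atTop (nhds 0) := by
  have hG : Tendsto (fun n : ℕ => |fS n| + 4 / ((n:ℝ) - 1)) atTop (nhds 0) := by
    have h1 : Tendsto (fun n : ℕ => |fS n|) atTop (nhds 0) := by
      simpa using tendsto_fS_nat.abs
    have h2 : Tendsto (fun n : ℕ => 4 / ((n:ℝ) - 1)) atTop (nhds 0) := by
      apply Tendsto.div_atTop tendsto_const_nhds
      exact tendsto_atTop_add_const_right _ _ tendsto_natCast_atTop_atTop
    simpa using h1.add h2
  apply squeeze_zero_norm' _ (hG.comp tendsto_nat_floor_atTop)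
  filter_upwards [eventually_ge_atTop (3:ℝ)] with y hy
  have hy0 : (0:ℝ) ≤ y := by linarith
  have hm : (3:ℝ) ≤ (⌊y⌋₊ : ℝ) := by
    have : (3:ℕ) ≤ ⌊y⌋₊ := Nat.le_floor (by exact_mod_cast hy)
    exact_mod_cast this
  have h1 : (⌊y⌋₊ : ℝ) ≤ y := Nat.floor_le hy0
  have h2 : y ≤ (⌊y⌋₊ : ℝ) + 1 := (Nat.lt_floor_add_one y).le
  have := interp hm h1 h2
  have habs : |fS y| ≤ |fS (⌊y⌋₊ : ℝ)| + 4 / ((⌊y⌋₊:ℝ) - 1) := by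
    have := abs_sub_abs_le_abs_sub (fS y) (fS (⌊y⌋₊:ℝ))
    linarith
  simpa [Real.norm_eq_abs, Function.comp] using habs

lemma fS_eq_FS {x : ℝ} (hx : 2 ≤ x) : fS x = FS x := by
  have hshift : Tendsto (fun n : ℕ => x + (n:ℝ)) atTop atTop :=
    tendsto_atTop_add_const_left _ _ tendsto_natCast_atTop_atTop
  have h1 : Tendsto (fun n : ℕ => fS (x + n)) atTop (nhds 0) :=
    tendsto_fS.comp hshift
  have h2 : Tendsto (fun n : ℕ => FS (x + n)) atTop (nhds 0) := by
    have hb : Tendsto (fun n : ℕ => 10 / (x + (n:ℝ))^2) atTop (nhds 0) := by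
      apply Tendsto.div_atTop tendsto_const_nhds
      exact (tendsto_pow_atTop (by norm_num)).comp hshift
    apply squeeze_zero_norm' _ hb
    filter_upwards with n
    simpa [Real.norm_eq_abs] using FS_bound (shift_two_le hx n)
  have h3 : Tendsto (fun n : ℕ => fS (x + n) - FS (x + n)) atTop (nhds 0) := by
    simpa using h1.sub h2
  have h4 : (fun n : ℕ => fS (x + n) - FS (x + n)) = fun _ : ℕ => fS x - FS x :=
    funext fun n => h_shift hx n
  rw [h4] at h3
  have := tendsto_nhds_unique h3 tendsto_const_nhds
  linarith

/-- Stirling's expansion with the `1/(12x)` correction: as `x → ∞`,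
`ln Γ(x) = (1/2)ln(2π) + (x − 1/2)ln x − x + 1/(12x) + o(1/x)`. -/
theorem log_Gamma_stirling :
    (fun x : ℝ => Real.log (Real.Gamma x)
        - ((1 / 2) * Real.log (2 * Real.pi) + (x - 1 / 2) * Real.log x - x
            + 1 / (12 * x)))
      =o[atTop] fun x : ℝ => 1 / x := by
  rw [isLittleO_iff]
  intro c hc
  filter_upwards [eventually_ge_atTop (2:ℝ), eventually_ge_atTop (10/c)] with x hx2 hxc
  have hx0 : (0:ℝ) < x := by linarith
  have heq : Real.log (Real.Gamma x)
      - ((1 / 2) * Real.log (2 * Real.pi) + (x - 1 / 2) * Real.log x - x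
          + 1 / (12 * x)) = fS x := rfl
  rw [heq, fS_eq_FS hx2, Real.norm_eq_abs, Real.norm_eq_abs,
    abs_of_pos (by positivity : (0:ℝ) < 1/x)]
  refine (FS_bound hx2).trans ?_
  rw [div_le_iff₀ (by positivity),
    show c * ((1:ℝ)/x) * x^2 = c * x by field_simp]
  rw [div_le_iff₀ hc] at hxc
  linarith
end

section
/- As x → ∞, the digamma function satisfies ψ(x) = ln x − 1/(2x) − 1/(12x²) + o(1/x²). -/
open Real Filter Asymptotics Set

/-- The digamma function `ψ = Γ'/Γ`, as the derivative of `log ∘ Γ`. -/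
noncomputable def digamma (x : ℝ) : ℝ :=
  deriv (fun y => Real.log (Real.Gamma y)) x

lemma diffLogGamma {x : ℝ} (hx : 0 < x) :
    DifferentiableAt ℝ (fun y => Real.log (Real.Gamma y)) x :=
  (Real.differentiableAt_Gamma (fun m => ne_of_gt
    (by have : (0:ℝ) ≤ m := m.cast_nonneg; linarith))).log
    (Real.Gamma_pos_of_pos hx).ne'

lemma digamma_rec {x : ℝ} (hx : 0 < x) : digamma (x + 1) = digamma x + 1 / x := by
  show deriv (fun y => Real.log (Real.Gamma y)) (x+1)
      = deriv (fun y => Real.log (Real.Gamma y)) x + 1 / x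
  rw [← deriv_comp_add_const, one_div, ← Real.deriv_log,
    ← deriv_add (diffLogGamma hx) (Real.differentiableAt_log hx.ne')]
  apply EventuallyEq.deriv_eq
  filter_upwards [eventually_gt_nhds hx] with y hy
  rw [Real.Gamma_add_one hy.ne', Real.log_mul hy.ne' (Real.Gamma_pos_of_pos hy).ne', add_comm]
  rfl

lemma convexLogGamma : ConvexOn ℝ (Ioi 0) (fun y => Real.log (Real.Gamma y)) := by
  simpa [Function.comp_def] using Real.convexOn_log_Gamma

lemma logGamma_slope {x : ℝ} (hx : 0 < x) :
    slope (fun y => Real.log (Real.Gamma y)) x (x + 1) = Real.log x := by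
  rw [slope_def_field, show x + 1 - x = (1:ℝ) by ring, div_one,
    Real.Gamma_add_one hx.ne', Real.log_mul hx.ne' (Real.Gamma_pos_of_pos hx).ne',
    add_sub_cancel_right]

lemma digamma_le_log {x : ℝ} (hx : 0 < x) : digamma x ≤ Real.log x := by
  have h := convexLogGamma.deriv_le_slope (mem_Ioi.mpr hx)
    (mem_Ioi.mpr (by linarith : (0:ℝ) < x + 1)) (by linarith) (diffLogGamma hx)
  rwa [logGamma_slope hx] at h

lemma log_le_digamma_add {x : ℝ} (hx : 0 < x) : Real.log x ≤ digamma x + 1 / x := by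
  have h := convexLogGamma.slope_le_deriv (mem_Ioi.mpr hx)
    (mem_Ioi.mpr (by linarith : (0:ℝ) < x + 1)) (by linarith)
    (diffLogGamma (by linarith : (0:ℝ) < x + 1))
  rw [logGamma_slope hx] at h
  exact h.trans (le_of_eq (digamma_rec hx))

/-- The remainder function. -/
noncomputable def Gdig (x : ℝ) : ℝ :=
  digamma x - Real.log x + 1/(2*x) + 1/(12*x^2)

lemma log_est {x : ℝ} (hx : 2 ≤ x) :
    |Real.log (1 + 1/x) - (1/x - 1/(2*x^2) + 1/(3*x^3))| ≤ 2/x^4 := by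
  have hx0 : (0:ℝ) < x := by linarith
  have ht : |(-(1/x))| < 1 := by
    rw [abs_neg, abs_of_pos (by positivity), div_lt_one hx0]; linarith
  have h := Real.abs_log_sub_add_sum_range_le ht 3
  simp only [Finset.sum_range_succ, Finset.sum_range_zero] at h
  norm_num at h
  have habs : |x| = x := abs_of_pos hx0
  rw [habs] at h
  have he : -x⁻¹ + (x ^ 2)⁻¹ / 2 + (-x⁻¹) ^ 3 / 3 + Real.log (1 + x⁻¹)
      = Real.log (1 + 1/x) - (1/x - 1/(2*x^2) + 1/(3*x^3)) := by
    rw [one_div]; ring_nf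
  rw [he] at h
  refine h.trans ?_
  have hinv : x⁻¹ ≤ 1/2 := by
    rw [← one_div, div_le_div_iff₀ hx0 (by norm_num)]; linarith
  rw [div_le_div_iff₀ (by linarith) (by positivity : (0:ℝ) < x^4)]
  have hone : (x ^ 4)⁻¹ * x ^ 4 = 1 := by field_simp
  rw [hone]; linarith

lemma Delta_bound {x : ℝ} (hx : 2 ≤ x) :
    |Gdig (x + 1) - Gdig x| ≤ 1/(x-1)^3 - 1/x^3 := by
  have hx0 : (0:ℝ) < x := by linarith
  have hx1 : (0:ℝ) < x + 1 := by linarith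
  have hlog : Real.log (x + 1) = Real.log x + Real.log (1 + 1/x) := by
    rw [← Real.log_mul hx0.ne' (by positivity)]
    congr 1; field_simp
  have key : Gdig (x + 1) - Gdig x
      = -(Real.log (1 + 1/x) - (1/x - 1/(2*x^2) + 1/(3*x^3)))
        - (3*x + 4) / (12*x^3*(x+1)^2) := by
    unfold Gdig
    rw [digamma_rec hx0, hlog]
    field_simp
    ring
  have h1 : |Gdig (x + 1) - Gdig x| ≤ 2/x^4 + (3*x + 4)/(12*x^3*(x+1)^2) := by
    rw [key]
    refine (abs_sub _ _).trans ?_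
    rw [abs_neg]
    exact add_le_add (log_est hx) (le_of_eq (abs_of_pos (by positivity)))
  have h2 : (3*x + 4)/(12*x^3*(x+1)^2) ≤ 1/x^4 := by
    rw [div_le_div_iff₀ (by positivity) (by positivity)]
    nlinarith [pow_pos hx0 5, pow_pos hx0 4, pow_pos hx0 3]
  have h3 : (3:ℝ)/x^4 ≤ 1/(x-1)^3 - 1/x^3 := by
    rw [le_sub_iff_add_le, div_add_div _ _ (by positivity : (x:ℝ)^4 ≠ 0)
      (by positivity : (x:ℝ)^3 ≠ 0), div_le_div_iff₀ (by positivity)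
      (pow_pos (by linarith : (0:ℝ) < x - 1) 3)]
    have hq : (0:ℝ) ≤ x^3*(6*x^2-8*x+3) :=
      mul_nonneg (pow_pos hx0 3).le (by nlinarith [sq_nonneg (3*x-2)])
    nlinarith [hq]
  calc |Gdig (x + 1) - Gdig x| ≤ 2/x^4 + (3*x + 4)/(12*x^3*(x+1)^2) := h1
    _ ≤ 2/x^4 + 1/x^4 := by linarith
    _ = 3/x^4 := by ring
    _ ≤ 1/(x-1)^3 - 1/x^3 := h3

lemma abs_Gdig_le {y : ℝ} (hy : 1 ≤ y) : |Gdig y| ≤ 2 / y := by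
  have hy0 : (0:ℝ) < y := by linarith
  have h1 : digamma y ≤ Real.log y := digamma_le_log hy0
  have h2 : Real.log y ≤ digamma y + 1 / y := log_le_digamma_add hy0
  have e1 : 1/(12*y^2) ≤ 1/(2*y) := by
    rw [div_le_div_iff₀ (by positivity) (by positivity)]; nlinarith
  have e2 : (0:ℝ) < 1/(2*y) := by positivity
  have e3 : 1/(2*y) ≤ 1/y := by
    rw [div_le_div_iff₀ (by positivity) hy0]; nlinarith
  have e4 : (0:ℝ) < 1/(12*y^2) := by positivity
  rw [abs_le]; unfold Gdig
  constructor
  · have : -(2/y) ≤ -(1/y) := by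
      rw [neg_le_neg_iff, div_le_div_iff₀ hy0 hy0]; nlinarith
    linarith
  · have : 1/y + 1/y = 2/y := by ring
    linarith

lemma tendsto_inv_shift (x c : ℝ) (k : ℕ) (hk : k ≠ 0) :
    Tendsto (fun n : ℕ => c / (x + n) ^ k) atTop (nhds 0) := by
  have hs : Tendsto (fun n : ℕ => x + (n:ℝ)) atTop atTop :=
    tendsto_atTop_add_const_left _ x tendsto_natCast_atTop_atTop
  have hp : Tendsto (fun n : ℕ => (x + (n:ℝ)) ^ k) atTop atTop :=
    (tendsto_pow_atTop hk).comp hs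
  have := hp.inv_tendsto_atTop.const_mul c
  simpa [div_eq_mul_inv] using this

lemma Gdig_bound {x : ℝ} (hx : 2 ≤ x) : |Gdig x| ≤ 1/(x-1)^3 := by
  have key : ∀ n : ℕ, |Gdig x| ≤ |Gdig (x + n)| + (1/(x-1)^3 - 1/(x + n - 1)^3) := by
    intro n
    induction n with
    | zero => simp
    | succ n ih =>
      have hn0 : (0:ℝ) ≤ n := n.cast_nonneg
      have hxn : 2 ≤ x + (n:ℝ) := by linarith
      have hd := Delta_bound hxn
      have h2 : |Gdig (x + n)| - |Gdig (x + n + 1)| ≤ |Gdig (x + n + 1) - Gdig (x + n)| := by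
        rw [abs_sub_comm]; exact abs_sub_abs_le_abs_sub _ _
      have hcast : x + ((n:ℝ) + 1) = x + n + 1 := by ring
      have hcast2 : x + (n:ℝ) + 1 - 1 = x + n := by ring
      push_cast
      rw [hcast, hcast2]
      push_cast at ih
      linarith
  have hlim : Tendsto (fun n : ℕ => |Gdig (x + n)| + (1/(x-1)^3 - 1/(x + n - 1)^3)) atTop
      (nhds (0 + (1/(x-1)^3 - 0))) := by
    apply Tendsto.add
    · apply squeeze_zero (fun n => abs_nonneg _)
        (fun n => abs_Gdig_le (by have : (0:ℝ) ≤ n := n.cast_nonneg; linarith))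
      have := tendsto_inv_shift x 2 1 one_ne_zero
      simpa using this
    · have := tendsto_inv_shift (x - 1) 1 3 three_ne_zero
      exact Tendsto.const_sub _ (by simpa [sub_add_eq_add_sub] using this)
  have := ge_of_tendsto' hlim key
  simpa using this

/-- As `x → ∞`, `ψ(x) = ln x − 1/(2x) − 1/(12x²) + o(1/x²)`. -/
theorem digamma_asymptotic :
    (fun x : ℝ => digamma x - (Real.log x - 1 / (2 * x) - 1 / (12 * x ^ 2)))
      =o[atTop] fun x : ℝ => 1 / x ^ 2 := by
  rw [isLittleO_iff]
  intro c hc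
  filter_upwards [eventually_ge_atTop (2:ℝ), eventually_ge_atTop (8/c)] with x hx2 hxc
  have hx0 : (0:ℝ) < x := by linarith
  have heq : digamma x - (Real.log x - 1 / (2 * x) - 1 / (12 * x ^ 2)) = Gdig x := by
    unfold Gdig; ring
  rw [Real.norm_eq_abs, Real.norm_eq_abs, heq]
  have h1 : |Gdig x| ≤ 1/(x-1)^3 := Gdig_bound hx2
  have h2 : 1/(x-1)^3 ≤ 8/x^3 := by
    rw [div_le_div_iff₀ (pow_pos (by linarith : (0:ℝ) < x - 1) 3) (by positivity)]
    have hq : (0:ℝ) ≤ (x-2)*(7*x^2-10*x+4) :=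
      mul_nonneg (by linarith) (by nlinarith [sq_nonneg (7*x-5)])
    nlinarith [hq]
  have h3 : (8:ℝ)/x^3 ≤ c * |1/x^2| := by
    rw [abs_of_pos (by positivity : (0:ℝ) < 1/x^2)]
    rw [mul_one_div, div_le_div_iff₀ (by positivity) (by positivity)]
    have h8 : 8 ≤ c * x := by
      rw [div_le_iff₀ hc] at hxc; linarith
    nlinarith
  linarith
end

section
/- Let π be the stationary distribution of the PageRank-type chain depending on parameter x_ij, with the derivative system (∂π/∂x_ij)(I − P) = π(∂P/∂x_ij), ∑_k ∂π_k/∂x_ij = 0. If π_i + π_j > 0, then the derivative vector ∂π/∂x_ij is nonzero. -/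
open Finset

/-- For the PageRank-type chain, if the derivative vector `D = ∂π/∂x_ij`
satisfies the linear system `D(I − P) = π(∂P/∂x_ij)` and `∑ₖ Dₖ = 0`, where
`∂P/∂x_ij` has entries `1/(n−1)` at `(i,i),(j,i)`, `−1/(n−1)` at `(i,j),(j,j)`
and `0` elsewhere, and if `π_i + π_j > 0`, then `D ≠ 0`. -/
theorem pagerank_stationary_deriv_ne_zero (n : ℕ) (hn : 2 ≤ n)
    (P dP : Matrix (Fin n) (Fin n) ℝ) (π D : Fin n → ℝ)
    (i j : Fin n) (hij : i ≠ j)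
    (hPnonneg : ∀ a b, 0 ≤ P a b) (hProw : ∀ a, ∑ b, P a b = 1)
    (hπnonneg : ∀ k, 0 ≤ π k) (hπsum : ∑ k, π k = 1)
    (hstat : ∀ b, ∑ a, π a * P a b = π b)
    (hdP : ∀ a b : Fin n, dP a b =
      if (a = i ∧ b = i) ∨ (a = j ∧ b = i) then 1 / ((n : ℝ) - 1)
      else if (a = i ∧ b = j) ∨ (a = j ∧ b = j) then -(1 / ((n : ℝ) - 1))
      else 0)
    (hsys : ∀ b, ∑ a, D a * ((if a = b then (1:ℝ) else 0) - P a b) =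
      ∑ a, π a * dP a b)
    (hDsum : ∑ k, D k = 0)
    (hpos : 0 < π i + π j) :
    D ≠ 0 := by
  intro hD
  have hc : (0:ℝ) < 1 / ((n : ℝ) - 1) := by
    have : (1:ℝ) ≤ (n : ℝ) - 1 := by
      have : (2:ℝ) ≤ (n:ℝ) := by exact_mod_cast hn
      linarith
    positivity
  have h := hsys i
  have hLHS : ∑ a, D a * ((if a = i then (1:ℝ) else 0) - P a i) = 0 := by
    apply Finset.sum_eq_zero
    intro a _
    simp [hD]
  have hRHS : ∑ a, π a * dP a i = (π i + π j) * (1 / ((n : ℝ) - 1)) := by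
    have : ∀ a : Fin n, π a * dP a i =
        (if a = i then π i * (1 / ((n : ℝ) - 1)) else 0) +
        (if a = j then π j * (1 / ((n : ℝ) - 1)) else 0) := by
      intro a
      rw [hdP]
      by_cases hai : a = i
      · subst hai; simp [hij, mul_comm]
      · by_cases haj : a = j
        · subst haj; simp [hai, hij, Ne.symm hij, mul_comm]
        · simp [hai, haj]
    rw [Finset.sum_congr rfl (fun a _ => this a), Finset.sum_add_distrib]
    simp
    ring
  rw [hLHS, hRHS] at h
  nlinarith
end
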